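/- Let ψ : [0,1]² → ℝ² be the affine map ψ(x,y) = (5π/8, −7π/8) + x·(π/4, π/4) + y·(−π/2, π/2). Then for all x, y ∈ [0,1]: Re φ(ψ(x,0)) < −0.05, Re φ(ψ(x,1)) > 0.05, Im φ(ψ(0,y)) < −0.05, and Im φ(ψ(1,y)) > 0.05. -/
import Mathlib
set_option maxHeartbeats 1000000


open Real

/-- The function `φ(x,y) = (1/3)(e^{ix} + e^{iy} + e^{i(x+y)})`. -/
noncomputable def phi : ℝ × ℝ → ℂ := fun p =>
  (1 / 3) * (Complex.exp (Complex.I * p.1) + Complex.exp (Complex.I * p.2) +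
    Complex.exp (Complex.I * (p.1 + p.2)))

/-- The affine map `ψ(x,y) = (5π/8, −7π/8) + x·(π/4, π/4) + y·(−π/2, π/2)`. -/
noncomputable def psi : ℝ × ℝ → ℝ × ℝ := fun p =>
  (5 * π / 8 + p.1 * (π / 4) + p.2 * (-(π / 2)),
   -(7 * π / 8) + p.1 * (π / 4) + p.2 * (π / 2))

lemma phi_re (a b : ℝ) : (phi (a, b)).re = (Real.cos a + Real.cos b + Real.cos (a+b))/3 := by
  simp [phi, mul_comm Complex.I, ← add_mul, ← Complex.ofReal_add, Complex.exp_ofReal_mul_I_re]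
  ring

lemma phi_im (a b : ℝ) : (phi (a, b)).im = (Real.sin a + Real.sin b + Real.sin (a+b))/3 := by
  simp [phi, mul_comm Complex.I, ← add_mul, ← Complex.ofReal_add, Complex.exp_ofReal_mul_I_im]
  ring

lemma sqrt2_facts : Real.sqrt 2 ^ 2 = 2 ∧ 1.414 < Real.sqrt 2 ∧ Real.sqrt 2 < 1.415 := by
  have h : Real.sqrt 2 ^ 2 = 2 := Real.sq_sqrt (by norm_num)
  have h0 : 0 ≤ Real.sqrt 2 := Real.sqrt_nonneg 2
  refine ⟨h, by nlinarith, by nlinarith⟩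

lemma pi8_facts : Real.sin (π/8) ^ 2 + Real.cos (π/8) ^ 2 = 1 ∧
    2 * Real.cos (π/8) ^ 2 - 1 = Real.sqrt 2 / 2 ∧
    2 * Real.sin (π/8) * Real.cos (π/8) = Real.sqrt 2 / 2 ∧
    0 ≤ Real.sin (π/8) ∧ 0.92 ≤ Real.cos (π/8) := by
  obtain ⟨h2, hlo, hhi⟩ := sqrt2_facts
  have hpi := Real.pi_pos
  have hc : 2 * Real.cos (π/8) ^ 2 - 1 = Real.sqrt 2 / 2 := by
    rw [← Real.cos_two_mul, show 2*(π/8) = π/4 by ring, Real.cos_pi_div_four]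
  have hs : 2 * Real.sin (π/8) * Real.cos (π/8) = Real.sqrt 2 / 2 := by
    rw [← Real.sin_two_mul, show 2*(π/8) = π/4 by ring, Real.sin_pi_div_four]
  have hsn : 0 ≤ Real.sin (π/8) :=
    Real.sin_nonneg_of_nonneg_of_le_pi (by positivity) (by linarith)
  have hcn : 0 ≤ Real.cos (π/8) :=
    Real.cos_nonneg_of_mem_Icc ⟨by nlinarith, by nlinarith⟩
  refine ⟨Real.sin_sq_add_cos_sq _, hc, hs, hsn, by nlinarith⟩

/-- Sign estimates for `φ ∘ ψ` on the four sides of the unit square. -/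
theorem phi_psi_boundary_estimates :
    ∀ x ∈ Set.Icc (0 : ℝ) 1, ∀ y ∈ Set.Icc (0 : ℝ) 1,
      (phi (psi (x, 0))).re < -0.05 ∧ (phi (psi (x, 1))).re > 0.05 ∧
      (phi (psi (0, y))).im < -0.05 ∧ (phi (psi (1, y))).im > 0.05 := by
  rintro x ⟨hx0, hx1⟩ y ⟨hy0, hy1⟩
  obtain ⟨h2, hlo, hhi⟩ := sqrt2_facts
  obtain ⟨hsc, hcc, hss, hsn, hcb⟩ := pi8_facts
  have hpi := Real.pi_pos
  -- bounds on cos θ where θ = x·π/4 − π/8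
  set θ : ℝ := x * (π/4) - π/8 with hθdef
  have hθc : Real.cos (π/8) ≤ Real.cos θ := by
    rw [← Real.cos_abs θ]
    apply Real.cos_le_cos_of_nonneg_of_le_pi (abs_nonneg _) (by linarith)
    rw [abs_le]
    constructor <;> nlinarith
  have hθ1 : Real.cos θ ≤ 1 := Real.cos_le_one θ
  -- bounds for u = y·π/2
  set u : ℝ := y * (π/2) with hudef
  have hucn : 0 ≤ Real.cos u := Real.cos_nonneg_of_mem_Icc ⟨by nlinarith, by nlinarith⟩
  have husn : 0 ≤ Real.sin u :=
    Real.sin_nonneg_of_nonneg_of_le_pi (by nlinarith) (by nlinarith)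
  have huc1 : Real.cos u ≤ 1 := Real.cos_le_one u
  have hus1 : Real.sin u ≤ 1 := Real.sin_le_one u
  -- special values
  have s58 : Real.sin (5*π/8) = Real.cos (π/8) := by
    rw [show 5*π/8 = π - 3*π/8 by ring, Real.sin_pi_sub,
      show 3*π/8 = π/2 - π/8 by ring, Real.sin_pi_div_two_sub]
  have c58 : Real.cos (5*π/8) = -Real.sin (π/8) := by
    rw [show 5*π/8 = π - 3*π/8 by ring, Real.cos_pi_sub,
      show 3*π/8 = π/2 - π/8 by ring, Real.cos_pi_div_two_sub]
  have s78 : Real.sin (7*π/8) = Real.sin (π/8) := by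
    rw [show 7*π/8 = π - π/8 by ring, Real.sin_pi_sub]
  have c78 : Real.cos (7*π/8) = -Real.cos (π/8) := by
    rw [show 7*π/8 = π - π/8 by ring, Real.cos_pi_sub]
  have c34 : Real.cos (3*π/4) = -(Real.sqrt 2 / 2) := by
    rw [show 3*π/4 = π - π/4 by ring, Real.cos_pi_sub, Real.cos_pi_div_four]
  have s34 : Real.sin (3*π/4) = Real.sqrt 2 / 2 := by
    rw [show 3*π/4 = π - π/4 by ring, Real.sin_pi_sub, Real.sin_pi_div_four]
  -- packaged angle-sum identities
  have cadd3 : ∀ w : ℝ, Real.cos (3*π/4 + w) + Real.cos (w - 3*π/4)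
      = -Real.sqrt 2 * Real.cos w := by
    intro w
    rw [show w - 3*π/4 = -(3*π/4 - w) by ring, Real.cos_neg, Real.cos_add, Real.cos_sub,
      c34, s34]
    ring
  have cadd4 : ∀ w : ℝ, Real.cos (π/4 + w) + Real.cos (w - π/4)
      = Real.sqrt 2 * Real.cos w := by
    intro w
    rw [show w - π/4 = -(π/4 - w) by ring, Real.cos_neg, Real.cos_add, Real.cos_sub,
      Real.cos_pi_div_four, Real.sin_pi_div_four]
    ring
  have saddL : ∀ w : ℝ, Real.sin (5*π/8 - w) + Real.sin (w - 7*π/8)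
      = (Real.cos (π/8) - Real.sin (π/8)) * (Real.cos w - Real.sin w) := by
    intro w
    rw [Real.sin_sub, Real.sin_sub, s58, c58, s78, c78]
    ring
  have saddR : ∀ w : ℝ, Real.sin (7*π/8 - w) + Real.sin (w - 5*π/8)
      = (Real.cos (π/8) - Real.sin (π/8)) * (Real.sin w - Real.cos w) := by
    intro w
    rw [Real.sin_sub, Real.sin_sub, s58, c58, s78, c78]
    ring
  -- the key bound for the imaginary parts:
  have hc2 : (0.8464:ℝ) ≤ Real.cos (π/8)^2 := by nlinarith [hcb]
  have key : (Real.cos (π/8) - Real.sin (π/8)) * (Real.cos u - Real.sin u)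
      < Real.sqrt 2 / 2 - 0.15 := by
    set k : ℝ := Real.cos (π/8) - Real.sin (π/8) with hk
    have hs8 : Real.sin (π/8) ≤ 0.4 := by nlinarith [hsc, hc2, hsn]
    have hk0 : 0 ≤ k := by rw [hk]; linarith
    have hk2 : k ^ 2 = 1 - Real.sqrt 2 / 2 := by rw [hk]; linear_combination hsc - hss
    have hb0 : (0:ℝ) < Real.sqrt 2 / 2 - 0.15 + k := by linarith
    have hkb : k < Real.sqrt 2 / 2 - 0.15 := by nlinarith [hk2, h2, hlo, hb0]
    nlinarith [mul_nonneg hk0 (by linarith : (0:ℝ) ≤ 1 - (Real.cos u - Real.sin u))]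
  refine ⟨?_, ?_, ?_, ?_⟩
  · -- bottom: Re φ(ψ(x,0)) < −0.05
    have hp : psi (x, 0) = (3*π/4 + θ, θ - 3*π/4) := by
      simp [psi, Prod.ext_iff]; constructor <;> ring
    rw [hp, phi_re, show 3*π/4 + θ + (θ - 3*π/4) = 2*θ by ring,
      Real.cos_two_mul, cadd3 θ]
    nlinarith [mul_nonneg (by linarith : (0:ℝ) ≤ 1 - Real.cos θ)
        (by nlinarith : (0:ℝ) ≤ 2 + 2*Real.cos θ - Real.sqrt 2)]
  · -- top: Re φ(ψ(x,1)) > 0.05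
    have hp : psi (x, 1) = (π/4 + θ, θ - π/4) := by
      simp [psi, Prod.ext_iff]; constructor <;> ring
    rw [hp, phi_re, show π/4 + θ + (θ - π/4) = 2*θ by ring,
      Real.cos_two_mul, cadd4 θ]
    nlinarith [hθc, hcb, hlo, sq_nonneg (Real.cos θ - 0.92),
      mul_nonneg (by linarith : (0:ℝ) ≤ Real.sqrt 2 - 1.414)
        (by linarith : (0:ℝ) ≤ Real.cos θ - 0.92)]
  · -- left: Im φ(ψ(0,y)) < −0.05
    have hp : psi (0, y) = (5*π/8 - u, u - 7*π/8) := by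
      simp [psi, Prod.ext_iff]; constructor <;> ring
    rw [hp, phi_im, show 5*π/8 - u + (u - 7*π/8) = -(π/4) by ring,
      Real.sin_neg, Real.sin_pi_div_four, saddL u]
    linarith [key]
  · -- right: Im φ(ψ(1,y)) > 0.05
    have hp : psi (1, y) = (7*π/8 - u, u - 5*π/8) := by
      simp [psi, Prod.ext_iff]; constructor <;> ring
    rw [hp, phi_im, show 7*π/8 - u + (u - 5*π/8) = π/4 by ring,
      Real.sin_pi_div_four, saddR u]
    linarith [key]
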